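/- If X and Y are octahedral Banach spaces, then the injective tensor product X ⊗̂_ε Y is octahedral. -/

import Mathlib

open Filter Topology

noncomputable section

/-- A Banach space is octahedral (OH). -/
def IsOctahedral (Z : Type*) [NormedAddCommGroup Z] : Prop :=
  ∀ (n : ℕ) (z : Fin n → Z), (∀ i, ‖z i‖ = 1) → ∀ ε : ℝ, 0 < ε →
    ∃ w : Z, ‖w‖ = 1 ∧ ∀ i, ‖z i + w‖ > 2 - ε

/-- Locally octahedral (LOH). -/
def IsLocallyOctahedral (Z : Type*) [NormedAddCommGroup Z] : Prop :=
  ∀ z : Z, ‖z‖ = 1 → ∀ ε : ℝ, 0 < ε →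
    ∃ w : Z, ‖w‖ = 1 ∧ ‖z + w‖ > 2 - ε ∧ ‖z - w‖ > 2 - ε

/-- Weakly octahedral (WOH). -/
def IsWeaklyOctahedral (X : Type*) [NormedAddCommGroup X] [NormedSpace ℝ X] : Prop :=
  ∀ (n : ℕ) (z : Fin n → X), (∀ i, ‖z i‖ = 1) → ∀ f : X →L[ℝ] ℝ, ‖f‖ ≤ 1 →
    ∀ ε : ℝ, 0 < ε → ∃ y : X, ‖y‖ = 1 ∧ ∀ i, ∀ t : ℝ, 0 < t →
      ‖z i + t • y‖ ≥ (1 - ε) * (|f (z i)| + t) ∧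
      ‖z i - t • y‖ ≥ (1 - ε) * (|f (z i)| + t)

/-- Almost square (ASQ), sequential formulation. -/
def IsASQ (Z : Type*) [NormedAddCommGroup Z] : Prop :=
  ∀ (n : ℕ) (z : Fin n → Z), (∀ i, ‖z i‖ = 1) →
    ∃ w : ℕ → Z, (∀ k, ‖w k‖ ≤ 1) ∧
      Tendsto (fun k => ‖w k‖) atTop (nhds 1) ∧
      ∀ i, Tendsto (fun k => ‖z i + w k‖) atTop (nhds 1) ∧
           Tendsto (fun k => ‖z i - w k‖) atTop (nhds 1)

/-- Almost square (ASQ), finite-ε formulation. -/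
def IsASQeps (Z : Type*) [NormedAddCommGroup Z] : Prop :=
  ∀ (n : ℕ) (z : Fin n → Z), (∀ i, ‖z i‖ = 1) → ∀ ε : ℝ, 0 < ε →
    ∃ w : Z, ‖w‖ = 1 ∧ ∀ i, ‖z i + w‖ ≤ 1 + ε ∧ ‖z i - w‖ ≤ 1 + ε

/-- Locally almost square (LASQ), sequential formulation. -/
def IsLASQ (Z : Type*) [NormedAddCommGroup Z] : Prop :=
  ∀ z : Z, ‖z‖ = 1 →
    ∃ w : ℕ → Z, (∀ k, ‖w k‖ ≤ 1) ∧
      Tendsto (fun k => ‖w k‖) atTop (nhds 1) ∧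
      Tendsto (fun k => ‖z + w k‖) atTop (nhds 1) ∧
      Tendsto (fun k => ‖z - w k‖) atTop (nhds 1)

/-- Locally almost square (LASQ), ε formulation. -/
def IsLASQeps (Z : Type*) [NormedAddCommGroup Z] : Prop :=
  ∀ z : Z, ‖z‖ = 1 → ∀ ε : ℝ, 0 < ε →
    ∃ w : Z, ‖w‖ = 1 ∧ ‖z + w‖ ≤ 1 + ε ∧ ‖z - w‖ ≤ 1 + ε

/-- Weakly almost square (WASQ). -/
def IsWASQ (Z : Type*) [NormedAddCommGroup Z] [NormedSpace ℝ Z] : Prop :=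
  ∀ z : Z, ‖z‖ = 1 →
    ∃ w : ℕ → Z, (∀ k, ‖w k‖ ≤ 1) ∧
      Tendsto (fun k => ‖w k‖) atTop (nhds 1) ∧
      Tendsto (fun k => ‖z + w k‖) atTop (nhds 1) ∧
      Tendsto (fun k => ‖z - w k‖) atTop (nhds 1) ∧
      ∀ f : Z →L[ℝ] ℝ, Tendsto (fun k => f (w k)) atTop (nhds 0)

/-- Local diameter two property: every slice of the unit ball has diameter two. -/
def HasLD2P (Z : Type*) [NormedAddCommGroup Z] [NormedSpace ℝ Z] : Prop :=
  ∀ f : Z →L[ℝ] ℝ, ‖f‖ = 1 → ∀ α : ℝ, 0 < α →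
    Metric.diam {x : Z | ‖x‖ ≤ 1 ∧ 1 - α < f x} = 2

/-- Diameter two property: every nonempty relatively weakly open subset of the unit
ball has diameter two. -/
def HasD2P (Z : Type*) [NormedAddCommGroup Z] [NormedSpace ℝ Z] : Prop :=
  ∀ U : Set Z, U.Nonempty → (∀ x ∈ U, ‖x‖ ≤ 1) →
    (∀ x ∈ U, ∃ (n : ℕ) (f : Fin n → Z →L[ℝ] ℝ) (δ : ℝ), 0 < δ ∧
      {y : Z | ‖y‖ ≤ 1 ∧ ∀ i, |f i y - f i x| < δ} ⊆ U) →
    Metric.diam U = 2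

/-- The Schur property. -/
def HasSchurProperty (Z : Type*) [SeminormedAddCommGroup Z] [NormedSpace ℝ Z] : Prop :=
  ∀ (u : ℕ → Z) (x : Z),
    (∀ f : Z →L[ℝ] ℝ, Tendsto (fun k => f (u k)) atTop (nhds (f x))) →
    Tendsto (fun k => ‖u k - x‖) atTop (nhds 0)

/-- The Dunford–Pettis property: every weakly compact operator is
weak-to-norm sequentially continuous. -/
def HasDPP (X : Type*) [NormedAddCommGroup X] [NormedSpace ℝ X] : Prop :=
  ∀ (Y : Type) (_ : NormedAddCommGroup Y) (_ : NormedSpace ℝ Y) (_ : CompleteSpace Y)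
    (T : X →L[ℝ] Y),
    (∃ K : Set (WeakSpace ℝ Y), IsCompact K ∧
      ∀ x : X, ‖x‖ ≤ 1 → toWeakSpace ℝ Y (T x) ∈ K) →
    ∀ (u : ℕ → X) (x : X),
      (∀ f : X →L[ℝ] ℝ, Tendsto (fun k => f (u k)) atTop (nhds (f x))) →
      Tendsto (fun k => ‖T (u k) - T x‖) atTop (nhds 0)

/-- `Z`, together with the bilinear-type map `t`, is (a realization of) the injective
tensor product `X ⊗̂_ε Y`: the span of elementary tensors is dense and the norm of any
linear combination of elementary tensors is given by the injective tensor norm. -/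
def IsInjTensorProduct (X Y Z : Type*) [NormedAddCommGroup X] [NormedSpace ℝ X]
    [NormedAddCommGroup Y] [NormedSpace ℝ Y] [NormedAddCommGroup Z] [NormedSpace ℝ Z]
    (t : X → Y → Z) : Prop :=
  (Submodule.span ℝ (Set.range fun p : X × Y => t p.1 p.2)).topologicalClosure = ⊤ ∧
  ∀ l : List (X × Y),
    ‖(l.map fun p => t p.1 p.2).sum‖ =
      sSup {s : ℝ | ∃ (f : X →L[ℝ] ℝ) (g : Y →L[ℝ] ℝ), ‖f‖ ≤ 1 ∧ ‖g‖ ≤ 1 ∧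
        s = |(l.map fun p => f p.1 * g p.2).sum|}

/-- `Z`, together with the map `t`, is (a realization of) the projective tensor product
`X ⊗̂_π Y`: the span of elementary tensors is dense and the norm of any combination of
elementary tensors is the infimum of `Σ ‖xᵢ‖‖yᵢ‖` over all representations (two formal
combinations represent the same tensor iff they agree against all pairs of functionals). -/
def IsProjTensorProduct (X Y Z : Type*) [NormedAddCommGroup X] [NormedSpace ℝ X]
    [NormedAddCommGroup Y] [NormedSpace ℝ Y] [NormedAddCommGroup Z] [NormedSpace ℝ Z]
    (t : X → Y → Z) : Prop :=
  (Submodule.span ℝ (Set.range fun p : X × Y => t p.1 p.2)).topologicalClosure = ⊤ ∧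
  ∀ l : List (X × Y),
    ‖(l.map fun p => t p.1 p.2).sum‖ =
      sInf {s : ℝ | ∃ l' : List (X × Y),
        (∀ (f : X →L[ℝ] ℝ) (g : Y →L[ℝ] ℝ),
          (l'.map fun p => f p.1 * g p.2).sum = (l.map fun p => f p.1 * g p.2).sum) ∧
        s = (l'.map fun p => ‖p.1‖ * ‖p.2‖).sum}

/-- `Z`, together with the diagonal map `δ : x ↦ x^N`, is (a realization of) the `N`-fold
injective symmetric tensor product `⊗̂_{ε,s,N} X`. -/
def IsInjSymTensorProduct (X : Type*) [NormedAddCommGroup X] [NormedSpace ℝ X] (N : ℕ)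
    (Z : Type*) [NormedAddCommGroup Z] [NormedSpace ℝ Z] (δ : X → Z) : Prop :=
  (Submodule.span ℝ (Set.range δ)).topologicalClosure = ⊤ ∧
  ∀ l : List (ℝ × X),
    ‖(l.map fun p => p.1 • δ p.2).sum‖ =
      sSup {s : ℝ | ∃ f : X →L[ℝ] ℝ, ‖f‖ ≤ 1 ∧
        s = |(l.map fun p => p.1 * (f p.2) ^ N).sum|}

/-- `Z`, together with the diagonal map `δ : x ↦ x^N`, is (a realization of) the `N`-fold
projective symmetric tensor product `⊗̂_{π,s,N} X`. -/
def IsProjSymTensorProduct (X : Type*) [NormedAddCommGroup X] [NormedSpace ℝ X] (N : ℕ)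
    (Z : Type*) [NormedAddCommGroup Z] [NormedSpace ℝ Z] (δ : X → Z) : Prop :=
  (Submodule.span ℝ (Set.range δ)).topologicalClosure = ⊤ ∧
  ∀ l : List (ℝ × X),
    ‖(l.map fun p => p.1 • δ p.2).sum‖ =
      sInf {s : ℝ | ∃ l' : List (ℝ × X),
        (∀ f : X →L[ℝ] ℝ,
          (l'.map fun p => p.1 * (f p.2) ^ N).sum = (l.map fun p => p.1 * (f p.2) ^ N).sum) ∧
        s = (l'.map fun p => |p.1| * ‖p.2‖ ^ N).sum}

/-- An operator `T : X* → Y` is weak*-to-weakly continuous. -/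
def WeakStarToWeakContinuous {X Y : Type*} [NormedAddCommGroup X] [NormedSpace ℝ X]
    [NormedAddCommGroup Y] [NormedSpace ℝ Y] (T : (X →L[ℝ] ℝ) →L[ℝ] Y) : Prop :=
  ∀ g : Y →L[ℝ] ℝ, Continuous fun f : WeakDual ℝ X => g (T f)

/-- The elementary tensor `x ⊗ y` regarded as the operator `x* ↦ x*(x) • y` in `L(X*, Y)`. -/
def elemTensor {X Y : Type*} [NormedAddCommGroup X] [NormedSpace ℝ X]
    [NormedAddCommGroup Y] [NormedSpace ℝ Y] (x : X) (y : Y) : (X →L[ℝ] ℝ) →L[ℝ] Y :=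
  (ContinuousLinearMap.apply ℝ ℝ x).smulRight y

/-- `n(Z, u) = 1`, i.e. `D(Z,u) = {f ∈ B_{Z*} : f(u) = 1}` is a norming set for `Z`. -/
def NormOneUnitary (Z : Type*) [NormedAddCommGroup Z] [NormedSpace ℝ Z] (u : Z) : Prop :=
  ‖u‖ = 1 ∧ ∀ z : Z, ‖z‖ ≤ sSup {r : ℝ | ∃ g : Z →L[ℝ] ℝ, ‖g‖ ≤ 1 ∧ g u = 1 ∧ r = |g z|}

/-- Asplund space: every closed separable subspace has separable dual. -/
def IsAsplund (Y : Type*) [NormedAddCommGroup Y] [NormedSpace ℝ Y] : Prop :=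
  ∀ S : Submodule ℝ Y, IsClosed (S : Set Y) → TopologicalSpace.SeparableSpace S →
    TopologicalSpace.SeparableSpace ((↥S) →L[ℝ] ℝ)

/-- The (metric) approximation-type property: finite-rank operators approximate the
identity uniformly on compact sets. -/
def HasAP (E : Type*) [NormedAddCommGroup E] [NormedSpace ℝ E] : Prop :=
  ∀ K : Set E, IsCompact K → ∀ ε : ℝ, 0 < ε →
    ∃ T : E →L[ℝ] E, FiniteDimensional ℝ (LinearMap.range (T : E →ₗ[ℝ] E)) ∧
      ∀ x ∈ K, ‖T x - x‖ ≤ ε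

end


section Aux

variable {X Y Z : Type*} [NormedAddCommGroup X] [NormedSpace ℝ X]
  [NormedAddCommGroup Y] [NormedSpace ℝ Y] [NormedAddCommGroup Z] [NormedSpace ℝ Z]
  {t : X → Y → Z}

/-- The set appearing in the injective norm formula. -/
def injSet (l : List (X × Y)) : Set ℝ :=
  {s : ℝ | ∃ (f : X →L[ℝ] ℝ) (g : Y →L[ℝ] ℝ), ‖f‖ ≤ 1 ∧ ‖g‖ ≤ 1 ∧
    s = |(l.map fun p => f p.1 * g p.2).sum|}

lemma injSet_nonempty (l : List (X × Y)) : (injSet l).Nonempty := by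
  refine ⟨|(l.map fun p => (0 : X →L[ℝ] ℝ) p.1 * (0 : Y →L[ℝ] ℝ) p.2).sum|, 0, 0, ?_, ?_, rfl⟩ <;>
    simp

lemma pairing_abs_le (l : List (X × Y)) {f : X →L[ℝ] ℝ} {g : Y →L[ℝ] ℝ}
    (hf : ‖f‖ ≤ 1) (hg : ‖g‖ ≤ 1) :
    |(l.map fun p => f p.1 * g p.2).sum| ≤ (l.map fun p => ‖p.1‖ * ‖p.2‖).sum := by
  induction l with
  | nil => simp
  | cons a l ih =>
      simp only [List.map_cons, List.sum_cons]
      refine (abs_add_le _ _).trans (add_le_add ?_ ih)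
      rw [abs_mul]
      have h1 : |f a.1| ≤ ‖a.1‖ := by
        calc |f a.1| ≤ ‖f‖ * ‖a.1‖ := f.le_opNorm a.1
        _ ≤ 1 * ‖a.1‖ := by gcongr
        _ = ‖a.1‖ := one_mul _
      have h2 : |g a.2| ≤ ‖a.2‖ := by
        calc |g a.2| ≤ ‖g‖ * ‖a.2‖ := g.le_opNorm a.2
        _ ≤ 1 * ‖a.2‖ := by gcongr
        _ = ‖a.2‖ := one_mul _
      exact mul_le_mul h1 h2 (abs_nonneg _) (norm_nonneg _)

lemma injSet_bddAbove (l : List (X × Y)) : BddAbove (injSet l) := by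
  refine ⟨(l.map fun p => ‖p.1‖ * ‖p.2‖).sum, ?_⟩
  rintro s ⟨f, g, hf, hg, rfl⟩
  exact pairing_abs_le l hf hg

lemma pairing_le_norm (ht : IsInjTensorProduct X Y Z t) (l : List (X × Y))
    {f : X →L[ℝ] ℝ} {g : Y →L[ℝ] ℝ} (hf : ‖f‖ ≤ 1) (hg : ‖g‖ ≤ 1) :
    (l.map fun p => f p.1 * g p.2).sum ≤ ‖(l.map fun p => t p.1 p.2).sum‖ := by
  rw [ht.2 l]
  exact (le_abs_self _).trans (le_csSup (injSet_bddAbove l) ⟨f, g, hf, hg, rfl⟩)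

lemma sum_eq_zero_of_pairing_zero (ht : IsInjTensorProduct X Y Z t) (l : List (X × Y))
    (h : ∀ (f : X →L[ℝ] ℝ) (g : Y →L[ℝ] ℝ), ‖f‖ ≤ 1 → ‖g‖ ≤ 1 →
      (l.map fun p => f p.1 * g p.2).sum = 0) :
    (l.map fun p => t p.1 p.2).sum = 0 := by
  rw [← norm_eq_zero, ht.2 l]
  have : {s : ℝ | ∃ (f : X →L[ℝ] ℝ) (g : Y →L[ℝ] ℝ), ‖f‖ ≤ 1 ∧ ‖g‖ ≤ 1 ∧
      s = |(l.map fun p => f p.1 * g p.2).sum|} = {0} := by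
    ext s
    constructor
    · rintro ⟨f, g, hf, hg, rfl⟩
      simp [h f g hf hg]
    · rintro rfl
      exact ⟨0, 0, by simp, by simp, by simp⟩
  rw [this, csSup_singleton]

lemma t_neg (ht : IsInjTensorProduct X Y Z t) (x : X) (y : Y) : t (-x) y = -t x y := by
  have := sum_eq_zero_of_pairing_zero ht [(x, y), (-x, y)] (fun f g _ _ => by simp)
  simp at this
  linear_combination (norm := abel) this

lemma t_add (ht : IsInjTensorProduct X Y Z t) (x x' : X) (y : Y) :
    t (x + x') y = t x y + t x' y := by
  have := sum_eq_zero_of_pairing_zero ht [(x + x', y), (-x, y), (-x', y)]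
    (fun f g _ _ => by simp; ring)
  simp only [List.map_cons, List.map_nil, List.sum_cons, List.sum_nil, add_zero,
    t_neg ht] at this
  linear_combination (norm := abel) this

end Aux

section Aux2

variable {X Y Z : Type*} [NormedAddCommGroup X] [NormedSpace ℝ X]
  [NormedAddCommGroup Y] [NormedSpace ℝ Y] [NormedAddCommGroup Z] [NormedSpace ℝ Z]
  {t : X → Y → Z}

lemma t_norm_le (ht : IsInjTensorProduct X Y Z t) (x : X) (y : Y) :
    ‖t x y‖ ≤ ‖x‖ * ‖y‖ := by
  have h := ht.2 [(x, y)]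
  simp only [List.map_cons, List.map_nil, List.sum_cons, List.sum_nil, add_zero] at h
  rw [h]
  refine csSup_le ?_ ?_
  · exact ⟨|(0 : X →L[ℝ] ℝ) x * (0 : Y →L[ℝ] ℝ) y|, 0, 0, by simp, by simp, rfl⟩
  · rintro s ⟨f, g, hf, hg, rfl⟩
    rw [abs_mul]
    have h1 : |f x| ≤ ‖x‖ := by
      calc |f x| ≤ ‖f‖ * ‖x‖ := f.le_opNorm x
      _ ≤ 1 * ‖x‖ := by gcongr
      _ = ‖x‖ := one_mul _
    have h2 : |g y| ≤ ‖y‖ := by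
      calc |g y| ≤ ‖g‖ * ‖y‖ := g.le_opNorm y
      _ ≤ 1 * ‖y‖ := by gcongr
      _ = ‖y‖ := one_mul _
    exact mul_le_mul h1 h2 (abs_nonneg _) (norm_nonneg _)

lemma t_zero (ht : IsInjTensorProduct X Y Z t) (y : Y) : t 0 y = 0 := by
  have h := t_add ht 0 0 y
  simp only [add_zero] at h
  have h2 : t 0 y + t 0 y = t 0 y + 0 := by rw [add_zero, ← h]
  exact add_left_cancel h2

lemma t_smul (ht : IsInjTensorProduct X Y Z t) (c : ℝ) (x : X) (y : Y) :
    t (c • x) y = c • t x y := by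
  set A : ℝ →+ Z := AddMonoidHom.mk' (fun c => t (c • x) y)
    (fun a b => by show t ((a + b) • x) y = t (a • x) y + t (b • x) y; rw [add_smul, t_add ht]) with hA
  have hsub : ∀ a b : ℝ, A a - A b = t ((a - b) • x) y := by
    intro a b
    have : (a - b) • x = a • x + -(b • x) := by rw [sub_smul]; abel
    rw [this, t_add ht, t_neg ht]
    simp [hA, AddMonoidHom.mk'_apply]
    abel
  have hlip : LipschitzWith (‖x‖ * ‖y‖).toNNReal A := by
    refine LipschitzWith.of_dist_le_mul fun a b => ?_
    rw [dist_eq_norm, hsub a b, dist_eq_norm]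
    calc ‖t ((a - b) • x) y‖ ≤ ‖(a - b) • x‖ * ‖y‖ := t_norm_le ht _ y
    _ = (‖x‖ * ‖y‖) * ‖a - b‖ := by rw [norm_smul]; ring
    _ = ((‖x‖ * ‖y‖).toNNReal : ℝ) * ‖a - b‖ := by
        rw [Real.coe_toNNReal _ (mul_nonneg (norm_nonneg _) (norm_nonneg _))]
  have := map_real_smul A hlip.continuous c 1
  simpa [hA, AddMonoidHom.mk'_apply, smul_eq_mul] using this

lemma t_norm (ht : IsInjTensorProduct X Y Z t) (x : X) (y : Y) :
    ‖t x y‖ = ‖x‖ * ‖y‖ := by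
  refine le_antisymm (t_norm_le ht x y) ?_
  by_cases hx : x = 0
  · simp [hx]
  by_cases hy : y = 0
  · simp [hy]
  obtain ⟨f, hf1, hfx⟩ := exists_dual_vector ℝ x (norm_ne_zero_iff.mpr hx)
  obtain ⟨g, hg1, hgy⟩ := exists_dual_vector ℝ y (norm_ne_zero_iff.mpr hy)
  have h := pairing_le_norm ht [(x, y)] hf1.le hg1.le
  simp only [List.map_cons, List.map_nil, List.sum_cons, List.sum_nil, add_zero] at h
  calc ‖x‖ * ‖y‖ = f x * g y := by rw [hfx, hgy]; norm_num
  _ ≤ ‖t x y‖ := h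

lemma smul_list_sum (ht : IsInjTensorProduct X Y Z t) (c : ℝ) (l : List (X × Y)) :
    ((l.map fun p => (c • p.1, p.2)).map fun p => t p.1 p.2).sum
      = c • (l.map fun p => t p.1 p.2).sum := by
  induction l with
  | nil => simp
  | cons a l ih =>
      simp only [List.map_cons, List.sum_cons, List.map_map] at ih ⊢
      rw [ih, t_smul ht, smul_add]

lemma span_rep (ht : IsInjTensorProduct X Y Z t) (v : Z)
    (hv : v ∈ Submodule.span ℝ (Set.range fun p : X × Y => t p.1 p.2)) :
    ∃ l : List (X × Y), (l.map fun p => t p.1 p.2).sum = v := by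
  induction hv using Submodule.span_induction with
  | mem z hz =>
      obtain ⟨p, rfl⟩ := hz
      exact ⟨[p], by simp⟩
  | zero => exact ⟨[], by simp⟩
  | add a b _ _ iha ihb =>
      obtain ⟨la, hla⟩ := iha
      obtain ⟨lb, hlb⟩ := ihb
      exact ⟨la ++ lb, by simp [hla, hlb]⟩
  | smul c a _ iha =>
      obtain ⟨la, hla⟩ := iha
      exact ⟨la.map fun p => (c • p.1, p.2), by rw [smul_list_sum ht, hla]⟩

end Aux2

section Aux3

variable {X : Type*} [NormedAddCommGroup X] [NormedSpace ℝ X]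

lemma combo_bound {x₀ u : X} (hx₀ : ‖x₀‖ = 1) (hun : ‖u‖ = 1) {d : ℝ} (hd1 : |d| = 1)
    {δ : ℝ} (hδ1 : δ < 1) (hkey : 2 - δ ≤ ‖u + d • x₀‖) (a b : ℝ) (ha : 0 ≤ a) (hb : 0 ≤ b) :
    (1 - δ) * (a + b) ≤ ‖a • u + b • (d • x₀)‖ := by
  have hne : u + d • x₀ ≠ 0 := by
    intro h0
    rw [h0, norm_zero] at hkey
    linarith
  obtain ⟨F, hF1, hFv⟩ := exists_dual_vector ℝ (u + d • x₀) (norm_ne_zero_iff.mpr hne)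
  have hFu : F u ≤ 1 := by
    calc F u ≤ |F u| := le_abs_self _
    _ ≤ ‖F‖ * ‖u‖ := F.le_opNorm u
    _ = 1 := by rw [hF1, hun, one_mul]
  have hFd : F (d • x₀) ≤ 1 := by
    calc F (d • x₀) ≤ |F (d • x₀)| := le_abs_self _
    _ ≤ ‖F‖ * ‖d • x₀‖ := F.le_opNorm _
    _ = 1 := by rw [hF1, norm_smul, Real.norm_eq_abs, hd1, hx₀]; ring
  have hsum : 2 - δ ≤ F u + F (d • x₀) := by
    have h : F (u + d • x₀) = F u + F (d • x₀) := map_add F _ _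
    rw [← h, hFv]
    exact hkey
  have hFu' : 1 - δ ≤ F u := by linarith
  have hFd' : 1 - δ ≤ F (d • x₀) := by linarith
  calc (1 - δ) * (a + b) = a * (1 - δ) + b * (1 - δ) := by ring
  _ ≤ a * F u + b * F (d • x₀) := by gcongr
  _ = F (a • u + b • (d • x₀)) := by rw [map_add, map_smul, map_smul]; simp [smul_eq_mul]
  _ ≤ |F (a • u + b • (d • x₀))| := le_abs_self _
  _ ≤ ‖F‖ * ‖a • u + b • (d • x₀)‖ := F.le_opNorm _
  _ = ‖a • u + b • (d • x₀)‖ := by rw [hF1, one_mul]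

lemma oh_findim (hX : IsOctahedral X) (E : Submodule ℝ X) [FiniteDimensional ℝ E]
    {δ : ℝ} (hδ : 0 < δ) (hδ1 : δ < 1) :
    ∃ x₀ : X, ‖x₀‖ = 1 ∧ ∀ e ∈ E, ∀ c : ℝ, (1 - δ) * (‖e‖ + |c|) ≤ ‖e + c • x₀‖ := by
  have hK : IsCompact (Metric.sphere (0 : E) 1) := isCompact_sphere 0 1
  obtain ⟨s, hsub, hfin, hcov⟩ := hK.finite_cover_balls (half_pos hδ)
  set L : List E := hfin.toFinset.toList with hL
  have hznorm : ∀ i : Fin L.length, ‖(L.get i : X)‖ = 1 := by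
    intro i
    have h : L.get i ∈ s := hfin.mem_toFinset.mp (Finset.mem_toList.mp (List.get_mem L i))
    have hs : L.get i ∈ Metric.sphere (0 : E) 1 := hsub h
    simpa using mem_sphere_zero_iff_norm.mp hs
  obtain ⟨x₀, hx₀, hx₀i⟩ := hX L.length (fun i => (L.get i : X)) hznorm (δ / 2) (half_pos hδ)
  refine ⟨x₀, hx₀, ?_⟩
  have key : ∀ u : X, u ∈ E → ‖u‖ = 1 → 2 - δ ≤ ‖u + x₀‖ := by
    intro u huE hu
    have hu' : (⟨u, huE⟩ : E) ∈ Metric.sphere (0 : E) 1 := by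
      simp [mem_sphere_zero_iff_norm, hu]
    obtain ⟨v, hvs, hv⟩ := Set.mem_iUnion₂.mp (hcov hu')
    have hvL : v ∈ L := by
      rw [hL, Finset.mem_toList, Set.Finite.mem_toFinset]; exact hvs
    obtain ⟨i, hi⟩ := List.mem_iff_get.mp hvL
    have hdist : ‖u - (v : X)‖ < δ / 2 := by
      have hb := Metric.mem_ball.mp hv
      rw [dist_eq_norm] at hb
      simpa using hb
    have h1 : 2 - δ / 2 < ‖((L.get i : E) : X) + x₀‖ := hx₀i i
    rw [hi] at h1
    have h2 : ‖(v : X) + x₀‖ ≤ ‖u + x₀‖ + ‖u - (v : X)‖ := by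
      have h3 : (v : X) + x₀ = (u + x₀) - (u - (v : X)) := by abel
      rw [h3]
      exact norm_sub_le _ _
    linarith
  have key2 : ∀ u : X, u ∈ E → ‖u‖ = 1 → ∀ d : ℝ, |d| = 1 → 2 - δ ≤ ‖u + d • x₀‖ := by
    intro u huE hu d hd
    rcases abs_eq (by norm_num : (0:ℝ) ≤ 1) |>.mp hd with rfl | rfl
    · simpa using key u huE hu
    · have hk := key (-u) (neg_mem huE) (by simpa using hu)
      have heq : ‖u + (-1 : ℝ) • x₀‖ = ‖-u + x₀‖ := by
        rw [← norm_neg]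
        congr 1
        simp
        abel
      rw [heq]
      exact hk
  intro e heE c
  by_cases hc : c = 0
  · subst hc
    simp only [abs_zero, add_zero, zero_smul]
    nlinarith [norm_nonneg e]
  by_cases he : e = 0
  · subst he
    simp only [norm_zero, zero_add]
    rw [norm_smul]
    simp only [Real.norm_eq_abs]
    nlinarith [abs_nonneg c]
  have ha : 0 < ‖e‖ := norm_pos_iff.mpr he
  have hb : 0 < |c| := abs_pos.mpr hc
  have huE : ‖e‖⁻¹ • e ∈ E := E.smul_mem _ heE
  have hun : ‖‖e‖⁻¹ • e‖ = 1 := by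
    rw [norm_smul, Real.norm_eq_abs, abs_inv, abs_of_pos ha, inv_mul_cancel₀ ha.ne']
  have hd1 : abs (c / abs c) = 1 := by
    rw [abs_div, abs_abs, div_self hb.ne']
  have hkey := key2 _ huE hun _ hd1
  have hdecomp : e + c • x₀ = ‖e‖ • (‖e‖⁻¹ • e) + |c| • ((c / |c|) • x₀) := by
    rw [smul_smul, smul_smul, mul_inv_cancel₀ ha.ne', one_smul]
    congr 1
    rw [mul_div_assoc']
    congr 1
    rw [mul_comm, mul_div_assoc, div_self hb.ne', mul_one]
  rw [hdecomp]
  exact combo_bound hx₀ hun hd1 hδ1 hkey _ _ ha.le hb.le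

end Aux3

section Aux4

variable {X : Type*} [NormedAddCommGroup X] [NormedSpace ℝ X]

set_option maxHeartbeats 2000000 in
lemma ext_fun (E : Submodule ℝ X) (x₀ : X) {δ : ℝ} (hδ : 0 < δ) (hδ1 : δ < 1)
    (hest : ∀ e ∈ E, ∀ c : ℝ, (1 - δ) * (‖e‖ + |c|) ≤ ‖e + c • x₀‖)
    (f : X →L[ℝ] ℝ) (hf : ‖f‖ ≤ 1) :
    ∃ F : X →L[ℝ] ℝ, ‖F‖ ≤ 1 ∧ (∀ e ∈ E, F e = (1 - δ) * f e) ∧ F x₀ = 1 - δ := by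
  have hx₀E : x₀ ∉ E := by
    intro hmem
    have h := hest (-x₀) (neg_mem hmem) 1
    simp only [one_smul, neg_add_cancel, norm_zero, norm_neg, abs_one] at h
    have h0 : 0 ≤ ‖x₀‖ := norm_nonneg _
    have hx1 : 1 ≤ ‖x₀‖ + 1 := by linarith
    nlinarith
  set pf : X →ₗ.[ℝ] ℝ := ⟨E, (f : X →ₗ[ℝ] ℝ).comp E.subtype⟩ with hpf
  have hx₀pf : x₀ ∉ pf.domain := hx₀E
  set g := pf.supSpanSingleton x₀ 1 hx₀pf with hg
  have hdom : g.domain = E ⊔ ℝ ∙ x₀ := LinearPMap.domain_supSpanSingleton _ _ _ _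
  -- the value of g
  have hval : ∀ (e : X) (he : e ∈ E) (c : ℝ) (hmem : e + c • x₀ ∈ g.domain),
      g ⟨e + c • x₀, hmem⟩ = f e + c := by
    intro e he c hmem
    have h := LinearPMap.supSpanSingleton_apply_mk pf x₀ 1 hx₀pf e he c
    have h2 : (f e : ℝ) + c • (1:ℝ) = f e + c := by simp
    exact h.trans h2
  -- decomposition of elements of the domain
  have hrep : ∀ z : g.domain, ∃ (e : X) (he : e ∈ E) (c : ℝ), (z : X) = e + c • x₀ := by
    intro z
    have hz : (z : X) ∈ E ⊔ ℝ ∙ x₀ := by rw [← hdom]; exact z.2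
    obtain ⟨e, he, m, hm, hz'⟩ := Submodule.mem_sup.mp hz
    obtain ⟨c, rfl⟩ := Submodule.mem_span_singleton.mp hm
    exact ⟨e, he, c, hz'.symm⟩
  -- norm bound
  have hbound : ∀ z : g.domain, ‖g.toFun z‖ ≤ (1 - δ)⁻¹ * ‖z‖ := by
    intro z
    obtain ⟨e, he, c, hzval⟩ := hrep z
    have hmem : e + c • x₀ ∈ g.domain := hzval ▸ z.2
    have hz2 : z = ⟨e + c • x₀, hmem⟩ := Subtype.ext hzval
    rw [hz2]
    have hv := hval e he c hmem
    have : g.toFun ⟨e + c • x₀, hmem⟩ = f e + c := hv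
    rw [this]
    have h1 : ‖f e + c‖ ≤ ‖e‖ + |c| := by
      rw [Real.norm_eq_abs]
      refine (abs_add_le _ _).trans ?_
      have : |f e| ≤ ‖e‖ := by
        calc |f e| ≤ ‖f‖ * ‖e‖ := f.le_opNorm e
        _ ≤ 1 * ‖e‖ := by gcongr
        _ = ‖e‖ := one_mul _
      linarith [this]
    have h2 : (1 - δ) * (‖e‖ + |c|) ≤ ‖e + c • x₀‖ := hest e he c
    have h3 : ‖(⟨e + c • x₀, hmem⟩ : g.domain)‖ = ‖e + c • x₀‖ := rfl
    rw [h3]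
    have hpos : (0:ℝ) < 1 - δ := by linarith
    calc ‖f e + c‖ ≤ ‖e‖ + |c| := h1
    _ = (1 - δ)⁻¹ * ((1 - δ) * (‖e‖ + |c|)) := by
        rw [← mul_assoc, inv_mul_cancel₀ hpos.ne', one_mul]
    _ ≤ (1 - δ)⁻¹ * ‖e + c • x₀‖ := by
        gcongr
  have hpos : (0:ℝ) < 1 - δ := by linarith
  set φ : g.domain →L[ℝ] ℝ := LinearMap.mkContinuous g.toFun ((1 - δ)⁻¹) hbound with hφ
  obtain ⟨F', hext, hnorm⟩ := exists_extension_norm_eq g.domain φ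
  have hφnorm : ‖φ‖ ≤ (1 - δ)⁻¹ :=
    LinearMap.mkContinuous_norm_le _ (by positivity) _
  refine ⟨(1 - δ) • F', ?_, ?_, ?_⟩
  · calc ‖(1 - δ) • F'‖ ≤ ‖(1 - δ : ℝ)‖ * ‖F'‖ := ContinuousLinearMap.opNorm_smul_le _ _
    _ = (1 - δ) * ‖φ‖ := by rw [Real.norm_eq_abs, abs_of_pos hpos, hnorm]
    _ ≤ (1 - δ) * (1 - δ)⁻¹ := by gcongr
    _ = 1 := mul_inv_cancel₀ hpos.ne'
  · intro e he
    have hmem : e ∈ g.domain := by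
      rw [hdom]; exact Submodule.mem_sup_left he
    have he0 : e + (0:ℝ) • x₀ ∈ g.domain := by simpa using hmem
    have h1 : F' e = φ ⟨e, hmem⟩ := by
      have := hext ⟨e, hmem⟩
      simpa using this
    have h2 : φ ⟨e, hmem⟩ = f e := by
      have hv := hval e he 0 he0
      have heq : (⟨e, hmem⟩ : g.domain) = ⟨e + (0:ℝ) • x₀, he0⟩ := by
        apply Subtype.ext; simp
      have : φ ⟨e, hmem⟩ = g.toFun ⟨e, hmem⟩ := rfl
      rw [this, show g.toFun ⟨e, hmem⟩ = g ⟨e, hmem⟩ from rfl, heq, hv]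
      simp
    simp only [ContinuousLinearMap.coe_smul', Pi.smul_apply, smul_eq_mul]
    rw [h1, h2]
  · have hmem : x₀ ∈ g.domain := by
      rw [hdom]
      exact Submodule.mem_sup_right (Submodule.mem_span_singleton.2 ⟨1, one_smul _ _⟩)
    have h01 : (0:X) + (1:ℝ) • x₀ ∈ g.domain := by simpa using hmem
    have h1 : F' x₀ = φ ⟨x₀, hmem⟩ := by
      have := hext ⟨x₀, hmem⟩
      simpa using this
    have h2 : φ ⟨x₀, hmem⟩ = 1 := by
      have hv := hval 0 (zero_mem E) 1 h01
      have heq : (⟨x₀, hmem⟩ : g.domain) = ⟨(0:X) + (1:ℝ) • x₀, h01⟩ := by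
        apply Subtype.ext; simp
      have : φ ⟨x₀, hmem⟩ = g ⟨x₀, hmem⟩ := rfl
      rw [this, heq, hv]
      simp
    simp only [ContinuousLinearMap.coe_smul', Pi.smul_apply, smul_eq_mul]
    rw [h1, h2, mul_one]

end Aux4

section Aux5

variable {X Y : Type*} [NormedAddCommGroup X] [NormedSpace ℝ X]
  [NormedAddCommGroup Y] [NormedSpace ℝ Y]

lemma pairing_neg_left (l : List (X × Y)) (f : X →L[ℝ] ℝ) (g : Y →L[ℝ] ℝ) :
    (l.map fun p => (-f) p.1 * g p.2).sum = -((l.map fun p => f p.1 * g p.2).sum) := by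
  induction l with
  | nil => simp
  | cons a l ih =>
      simp only [List.map_cons, List.sum_cons, ContinuousLinearMap.neg_apply, neg_mul] at ih ⊢
      rw [ih]
      ring

end Aux5


theorem statement3 (X Y Z : Type*) [NormedAddCommGroup X] [NormedSpace ℝ X] [CompleteSpace X]
    [NormedAddCommGroup Y] [NormedSpace ℝ Y] [CompleteSpace Y]
    [NormedAddCommGroup Z] [NormedSpace ℝ Z] [CompleteSpace Z]
    (t : X → Y → Z) (ht : IsInjTensorProduct X Y Z t)
    (hX : IsOctahedral X) (hY : IsOctahedral Y) :
    IsOctahedral Z := by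
  intro n u hu ε hε
  set δ : ℝ := min (ε / 16) (1 / 4) with hδdef
  have hδpos : 0 < δ := lt_min (by positivity) (by norm_num)
  have hδ1 : δ < 1 := lt_of_le_of_lt (min_le_right _ _) (by norm_num)
  have hδε : δ ≤ ε / 16 := min_le_left _ _
  -- approximate each u i by a finite combination of elementary tensors
  have hdense : Dense (↑(Submodule.span ℝ (Set.range fun p : X × Y => t p.1 p.2)) : Set Z) :=
    Submodule.dense_iff_topologicalClosure_eq_top.mpr ht.1
  have hrep : ∀ i : Fin n, ∃ l : List (X × Y),
      ‖u i - (l.map fun p => t p.1 p.2).sum‖ < δ := by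
    intro i
    have hcl := hdense (u i)
    obtain ⟨v, hv, hd⟩ := Metric.mem_closure_iff.mp hcl δ hδpos
    obtain ⟨l, hl⟩ := span_rep ht v hv
    refine ⟨l, ?_⟩
    rw [hl]
    rwa [dist_eq_norm] at hd
  choose L hL using hrep
  -- near-optimal functionals
  have hfg : ∀ i : Fin n, ∃ (f : X →L[ℝ] ℝ) (g : Y →L[ℝ] ℝ), ‖f‖ ≤ 1 ∧ ‖g‖ ≤ 1 ∧
      1 - 2 * δ < ((L i).map fun p => f p.1 * g p.2).sum := by
    intro i
    have hnv : 1 - δ < ‖((L i).map fun p => t p.1 p.2).sum‖ := by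
      have h1 := hL i
      have h2 := hu i
      have h3 : ‖u i‖ - ‖u i - ((L i).map fun p => t p.1 p.2).sum‖
          ≤ ‖((L i).map fun p => t p.1 p.2).sum‖ := by
        have := norm_sub_norm_le (u i) ((L i).map fun p => t p.1 p.2).sum
        have h4 : ‖u i‖ - ‖((L i).map fun p => t p.1 p.2).sum‖
            ≤ ‖u i - ((L i).map fun p => t p.1 p.2).sum‖ := this
        linarith
      rw [h2] at h3
      linarith
    rw [ht.2] at hnv
    have hlt : 1 - 2 * δ < sSup (injSet (L i)) := by
      have : (1:ℝ) - 2 * δ < 1 - δ := by linarith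
      exact lt_trans this hnv
    obtain ⟨s, hs, hslt⟩ := exists_lt_of_lt_csSup (injSet_nonempty (L i)) hlt
    obtain ⟨f, g, hf, hg, rfl⟩ := hs
    rcases le_or_gt 0 (((L i).map fun p => f p.1 * g p.2).sum) with hpos | hneg
    · exact ⟨f, g, hf, hg, by rwa [abs_of_nonneg hpos] at hslt⟩
    · refine ⟨-f, g, by rwa [norm_neg], hg, ?_⟩
      rw [pairing_neg_left]
      rwa [abs_of_neg hneg] at hslt
  choose f g hf hg hfgval using hfg
  -- finite-dimensional subspaces spanned by the components
  set sX : Set X := ⋃ i : Fin n, Prod.fst '' {p | p ∈ L i} with hsX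
  set sY : Set Y := ⋃ i : Fin n, Prod.snd '' {p | p ∈ L i} with hsY
  have hsXfin : sX.Finite := Set.finite_iUnion fun i => (L i).finite_toSet.image _
  have hsYfin : sY.Finite := Set.finite_iUnion fun i => (L i).finite_toSet.image _
  set E : Submodule ℝ X := Submodule.span ℝ sX with hE
  set F : Submodule ℝ Y := Submodule.span ℝ sY with hF
  haveI : FiniteDimensional ℝ E := FiniteDimensional.span_of_finite ℝ hsXfin
  haveI : FiniteDimensional ℝ F := FiniteDimensional.span_of_finite ℝ hsYfin
  obtain ⟨x₀, hx₀n, hx₀est⟩ := oh_findim hX E hδpos hδ1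
  obtain ⟨y₀, hy₀n, hy₀est⟩ := oh_findim hY F hδpos hδ1
  have hmemE : ∀ (i : Fin n), ∀ p ∈ L i, p.1 ∈ E := fun i p hp =>
    Submodule.subset_span (Set.mem_iUnion.2 ⟨i, ⟨p, hp, rfl⟩⟩)
  have hmemF : ∀ (i : Fin n), ∀ p ∈ L i, p.2 ∈ F := fun i p hp =>
    Submodule.subset_span (Set.mem_iUnion.2 ⟨i, ⟨p, hp, rfl⟩⟩)
  refine ⟨t x₀ y₀, by rw [t_norm ht, hx₀n, hy₀n, one_mul], ?_⟩
  intro i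
  obtain ⟨Fi, hFi1, hFiE, hFix₀⟩ := ext_fun E x₀ hδpos hδ1 hx₀est (f i) (hf i)
  obtain ⟨Gi, hGi1, hGiF, hGiy₀⟩ := ext_fun F y₀ hδpos hδ1 hy₀est (g i) (hg i)
  set l' : List (X × Y) := L i ++ [(x₀, y₀)] with hl'
  have hsum' : (l'.map fun p => t p.1 p.2).sum
      = ((L i).map fun p => t p.1 p.2).sum + t x₀ y₀ := by
    rw [hl', List.map_append, List.sum_append]
    simp
  have hpair : (l'.map fun p => Fi p.1 * Gi p.2).sum
      = (1 - δ) ^ 2 * (((L i).map fun p => f i p.1 * g i p.2).sum) + (1 - δ) * (1 - δ) := by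
    rw [hl', List.map_append, List.sum_append]
    congr 1
    · have hcongr : (L i).map (fun p => Fi p.1 * Gi p.2)
          = (L i).map fun p => (1 - δ) ^ 2 * (f i p.1 * g i p.2) := by
        refine List.map_congr_left fun p hp => ?_
        rw [hFiE p.1 (hmemE i p hp), hGiF p.2 (hmemF i p hp)]
        ring
      rw [hcongr, List.sum_map_mul_left]
    · simp [hFix₀, hGiy₀]
  have hlow : (l'.map fun p => Fi p.1 * Gi p.2).sum ≤ ‖(l'.map fun p => t p.1 p.2).sum‖ :=
    pairing_le_norm ht l' hFi1 hGi1
  rw [hsum', hpair] at hlow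
  have htri : ‖((L i).map fun p => t p.1 p.2).sum + t x₀ y₀‖
      ≤ ‖u i + t x₀ y₀‖ + ‖u i - ((L i).map fun p => t p.1 p.2).sum‖ := by
    have heq : ((L i).map fun p => t p.1 p.2).sum + t x₀ y₀
        = (u i + t x₀ y₀) - (u i - ((L i).map fun p => t p.1 p.2).sum) := by abel
    rw [heq]
    exact norm_sub_le _ _
  have hLi := hL i
  have hfgi := hfgval i
  have hδε' : 16 * δ ≤ ε := by linarith
  have hA : (1 - δ) ^ 2 * (((L i).map fun p => f i p.1 * g i p.2).sum) + (1 - δ) * (1 - δ) - δ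
      < ‖u i + t x₀ y₀‖ := by linarith
  have h1 : (1 - δ) ^ 2 * (1 - 2 * δ) ≤ (1 - δ) ^ 2 * (((L i).map fun p => f i p.1 * g i p.2).sum) :=
    mul_le_mul_of_nonneg_left hfgi.le (sq_nonneg _)
  have h2 : 2 - 7 * δ ≤ (1 - δ) ^ 2 * (1 - 2 * δ) + (1 - δ) * (1 - δ) - δ := by
    nlinarith [sq_nonneg δ, hδ1, hδpos]
  linarith
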